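/- Let Ω be a set, 0 ∈ Ω a marked point, and let K₁, K₂, K₃ : Ω → ℝ be functions such that K₁(0), K₂(0), K₃(0) are pairwise distinct. Define f = (K₂ - K₃)/(K₂(0) - K₃(0)). Suppose (i) K₁ - K₂ = (K₁(0) - K₂(0))·f and K₁ - K₃ = (K₁(0) - K₃(0))·f (as functions), and (ii) for a positive measure ν on Ω and a function κ, ∫(K_i κ + 2K_i²) dν is the same for i = 1, 2, 3. Then ∫ f² dν = 0. In particular if ν gives positive mass to every nonempty open set containing 0 and f is continuous with f(0) = 1, this is a contradiction; hence at least two of K₁(0), K₂(0), K₃(0) must coincide under these hypotheses. -/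
import Mathlib


open MeasureTheory

theorem stmt_12 {Ω : Type*} [MeasurableSpace Ω] (ν : Measure Ω)
    (z : Ω) (K₁ K₂ K₃ κ : Ω → ℝ)
    (hdist12 : K₁ z ≠ K₂ z) (hdist13 : K₁ z ≠ K₃ z) (hdist23 : K₂ z ≠ K₃ z)
    (f : Ω → ℝ) (hf : ∀ b, f b = (K₂ b - K₃ b) / (K₂ z - K₃ z))
    (h12 : ∀ b, K₁ b - K₂ b = (K₁ z - K₂ z) * f b)
    (h13 : ∀ b, K₁ b - K₃ b = (K₁ z - K₃ z) * f b)
    (hint_κ : ∀ i ∈ ({K₁, K₂, K₃} : Set (Ω → ℝ)), Integrable (fun b => i b * κ b) ν)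
    (hint_sq : ∀ i ∈ ({K₁, K₂, K₃} : Set (Ω → ℝ)), ∀ j ∈ ({K₁, K₂, K₃} : Set (Ω → ℝ)),
      Integrable (fun b => i b * j b) ν)
    (heat12 : ∫ b, (K₁ b * κ b + 2 * (K₁ b) ^ 2) ∂ν
            = ∫ b, (K₂ b * κ b + 2 * (K₂ b) ^ 2) ∂ν)
    (heat13 : ∫ b, (K₁ b * κ b + 2 * (K₁ b) ^ 2) ∂ν
            = ∫ b, (K₃ b * κ b + 2 * (K₃ b) ^ 2) ∂ν) :
    ∫ b, (f b) ^ 2 ∂ν = 0 := by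

  have hK1 : (K₁ : Ω → ℝ) ∈ ({K₁, K₂, K₃} : Set (Ω → ℝ)) := by simp
  have hK2 : (K₂ : Ω → ℝ) ∈ ({K₁, K₂, K₃} : Set (Ω → ℝ)) := by simp
  have hK3 : (K₃ : Ω → ℝ) ∈ ({K₁, K₂, K₃} : Set (Ω → ℝ)) := by simp
  have hc12 : K₁ z - K₂ z ≠ 0 := sub_ne_zero.mpr hdist12
  have hc13 : K₁ z - K₃ z ≠ 0 := sub_ne_zero.mpr hdist13
  have hc23 : K₂ z - K₃ z ≠ 0 := sub_ne_zero.mpr hdist23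
  have hfmul : ∀ g : Ω → ℝ, Integrable (fun b => K₂ b * g b) ν →
      Integrable (fun b => K₃ b * g b) ν → Integrable (fun b => f b * g b) ν := by
    intro g h2 h3
    have h := (h2.sub h3).const_mul (K₂ z - K₃ z)⁻¹
    have heq : (fun b => f b * g b)
        = fun b => (K₂ z - K₃ z)⁻¹ * (K₂ b * g b - K₃ b * g b) := by
      funext b; rw [hf b]; ring
    rw [heq]; exact h
  have hfκ := hfmul κ (hint_κ K₂ hK2) (hint_κ K₃ hK3)
  have hfK1 := hfmul K₁ (hint_sq K₂ hK2 K₁ hK1) (hint_sq K₃ hK3 K₁ hK1)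
  have hfK2 := hfmul K₂ (hint_sq K₂ hK2 K₂ hK2) (hint_sq K₃ hK3 K₂ hK2)
  have hfK3 := hfmul K₃ (hint_sq K₂ hK2 K₃ hK3) (hint_sq K₃ hK3 K₃ hK3)
  have hg : ∀ G : Ω → ℝ, Integrable (fun b => f b * G b) ν →
      Integrable (fun b => f b * (κ b + 2 * (K₁ b + G b))) ν := by
    intro G hG
    have h := hfκ.add ((hfK1.add hG).const_mul 2)
    have heq : (fun b => f b * (κ b + 2 * (K₁ b + G b)))
        = fun b => f b * κ b + 2 * (f b * K₁ b + f b * G b) := by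
      funext b; ring
    rw [heq]; exact h
  have hg2 := hg K₂ hfK2
  have hg3 := hg K₃ hfK3
  have hA : ∀ i ∈ ({K₁, K₂, K₃} : Set (Ω → ℝ)),
      Integrable (fun b => i b * κ b + 2 * (i b) ^ 2) ν := by
    intro i hi
    have h := (hint_κ i hi).add ((hint_sq i hi i hi).const_mul 2)
    have heq : (fun b => i b * κ b + 2 * (i b) ^ 2)
        = fun b => i b * κ b + 2 * (i b * i b) := by funext b; ring
    rw [heq]; exact h
  have key : ∀ (G : Ω → ℝ), G ∈ ({K₁, K₂, K₃} : Set (Ω → ℝ)) →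
      (∀ b, K₁ b - G b = (K₁ z - G z) * f b) →
      (∫ b, (K₁ b * κ b + 2 * (K₁ b) ^ 2) ∂ν = ∫ b, (G b * κ b + 2 * (G b) ^ 2) ∂ν) →
      (K₁ z - G z ≠ 0) →
      ∫ b, f b * (κ b + 2 * (K₁ b + G b)) ∂ν = 0 := by
    intro G hGmem hG heatG hcG
    have h0 : ∫ b, ((K₁ b * κ b + 2 * (K₁ b) ^ 2) - (G b * κ b + 2 * (G b) ^ 2)) ∂ν = 0 := by
      rw [integral_sub (hA K₁ hK1) (hA G hGmem), heatG, sub_self]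
    have h1 : (K₁ z - G z) * ∫ b, f b * (κ b + 2 * (K₁ b + G b)) ∂ν = 0 := by
      rw [← integral_const_mul]
      rw [show (fun b => (K₁ z - G z) * (f b * (κ b + 2 * (K₁ b + G b))))
          = fun b => (K₁ b * κ b + 2 * (K₁ b) ^ 2) - (G b * κ b + 2 * (G b) ^ 2) from
        funext fun b => by linear_combination (-(κ b + 2 * (K₁ b + G b))) * (hG b)]
      exact h0
    exact (mul_eq_zero.mp h1).resolve_left hcG
  have hI2 := key K₂ hK2 h12 heat12 hc12
  have hI3 := key K₃ hK3 h13 heat13 hc13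
  have hK23 : ∀ b, K₂ b - K₃ b = (K₂ z - K₃ z) * f b := by
    intro b; rw [hf b]; field_simp
  have h0 : ∫ b, (f b * (κ b + 2 * (K₁ b + K₂ b)) - f b * (κ b + 2 * (K₁ b + K₃ b))) ∂ν = 0 := by
    rw [integral_sub hg2 hg3, hI2, hI3, sub_self]
  have h1 : (2 * (K₂ z - K₃ z)) * ∫ b, (f b) ^ 2 ∂ν = 0 := by
    rw [← integral_const_mul]
    rw [show (fun b => (2 * (K₂ z - K₃ z)) * (f b) ^ 2)
        = fun b => f b * (κ b + 2 * (K₁ b + K₂ b)) - f b * (κ b + 2 * (K₁ b + K₃ b)) from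
      funext fun b => by linear_combination (-2 * f b) * (hK23 b)]
    exact h0
  have h2 : (2 : ℝ) * (K₂ z - K₃ z) ≠ 0 := mul_ne_zero two_ne_zero hc23
  exact (mul_eq_zero.mp h1).resolve_left h2
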